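/- Let p be an odd prime, k ≥ 1, and G = D_{p^k}. Then p^k α − 1 is an eigenvalue of the matrix A_α(S_G) = α·D + (1−α)·A with multiplicity at least p^k − 2, and (p^k + 1)α − 1 is an eigenvalue with multiplicity at least p^k − 1, for any real α. -/

import Mathlib

def superpowerGraph (G : Type*) [Group G] : SimpleGraph G where
  Adj a b := a ≠ b ∧ (orderOf a ∣ orderOf b ∨ orderOf b ∣ orderOf a)
  symm := ⟨fun _ _ h => ⟨h.1.symm, h.2.symm⟩⟩
  loopless := ⟨fun _ h => h.1 rfl⟩

noncomputable instance (G : Type*) [Group G] [DecidableEq G] :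
    DecidableRel (superpowerGraph G).Adj :=
  fun a b => show Decidable (a ≠ b ∧ (orderOf a ∣ orderOf b ∨ orderOf b ∣ orderOf a)) from
    instDecidableAnd

open Polynomial Matrix

section Generic

lemma charpoly_shift {N : Type*} [Fintype N] [DecidableEq N] (M : Matrix N N ℝ) (μ : ℝ) :
    (M - μ • (1 : Matrix N N ℝ)).charpoly = M.charpoly.comp (X + C μ) := by
  have hf : M.charpoly.comp (X + C μ)
      = (eval₂RingHom Polynomial.C (X + C μ)) M.charpoly := rfl
  rw [hf, Matrix.charpoly, Matrix.charpoly, RingHom.map_det]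
  congr 1
  ext i j
  by_cases h : i = j
  · subst h
    simp [charmatrix_apply_eq, Matrix.sub_apply, Matrix.smul_apply, Matrix.one_apply_eq, map_sub]
    ring
  · simp [charmatrix_apply_ne _ _ _ h, Matrix.sub_apply, Matrix.smul_apply, Matrix.one_apply_ne h]

lemma rootMult_ge {N : Type*} [Fintype N] [DecidableEq N] (M : Matrix N N ℝ) (μ : ℝ)
    {m : ℕ} (v : Fin m → N → ℝ) (hv : LinearIndependent ℝ v)
    (hev : ∀ j, M *ᵥ v j = μ • v j) :
    m ≤ M.charpoly.rootMultiplicity μ := by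
  classical
  set M' := M - μ • (1 : Matrix N N ℝ) with hM'
  set φ : Module.End ℝ (N → ℝ) := Matrix.mulVecLin M' with hφ
  have hker : ∀ j, v j ∈ LinearMap.ker φ := by
    intro j
    simp only [LinearMap.mem_ker, hφ, Matrix.mulVecLin_apply, hM', Matrix.sub_mulVec,
      Matrix.smul_mulVec, Matrix.one_mulVec, hev j, sub_self]
  have h1 : m ≤ Module.finrank ℝ (LinearMap.ker φ) := by
    have : LinearIndependent ℝ (fun j => (⟨v j, hker j⟩ : LinearMap.ker φ)) := by
      apply LinearIndependent.of_comp (LinearMap.ker φ).subtype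
      exact hv
    simpa using this.fintype_card_le_finrank
  have h2 : LinearMap.ker φ ≤ φ.maxGenEigenspace 0 := by
    intro x hx
    rw [Module.End.mem_maxGenEigenspace]
    exact ⟨1, by simpa using hx⟩
  have h3 : Module.finrank ℝ (φ.maxGenEigenspace 0) = (LinearMap.charpoly φ).natTrailingDegree :=
    LinearMap.finrank_maxGenEigenspace_zero_eq φ
  have h4 : LinearMap.charpoly φ = M'.charpoly := by
    rw [← LinearMap.charpoly_toMatrix φ (Pi.basisFun ℝ N)]
    congr 1
    rw [LinearMap.toMatrix_eq_toMatrix']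
    exact LinearMap.toMatrix'_toLin' M'
  calc m ≤ Module.finrank ℝ (LinearMap.ker φ) := h1
    _ ≤ Module.finrank ℝ (φ.maxGenEigenspace 0) := Submodule.finrank_mono h2
    _ = (LinearMap.charpoly φ).natTrailingDegree := h3
    _ = M'.charpoly.natTrailingDegree := by rw [h4]
    _ = (M.charpoly.comp (X + C μ)).natTrailingDegree := by rw [hM', charpoly_shift]
    _ = M.charpoly.rootMultiplicity μ := rootMultiplicity_eq_natTrailingDegree.symm

lemma helperEig {V : Type*} [Fintype V] [DecidableEq V] (H : SimpleGraph V) [DecidableRel H.Adj]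
    (α : ℝ) (a b : V) (hab : a ≠ b) (d : ℕ) (hda : H.degree a = d) (hdb : H.degree b = d)
    (hAdj : H.Adj a b) (hiff : ∀ x, x ≠ a → x ≠ b → (H.Adj x a ↔ H.Adj x b)) :
    (α • Matrix.diagonal (fun v => (H.degree v : ℝ)) + (1 - α) • H.adjMatrix ℝ) *ᵥ
      (Pi.single a 1 - Pi.single b 1)
      = (((d : ℝ) + 1) * α - 1) • (Pi.single a 1 - Pi.single b 1) := by
  funext x
  have hA : (H.adjMatrix ℝ *ᵥ (Pi.single a 1 - Pi.single b 1)) x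
      = (if H.Adj x a then (1:ℝ) else 0) - (if H.Adj x b then 1 else 0) := by
    rw [SimpleGraph.adjMatrix_mulVec_apply]
    rw [show (Pi.single a 1 - Pi.single b 1 : V → ℝ) = fun u => Pi.single a 1 u - Pi.single b 1 u
      from rfl]
    rw [Finset.sum_sub_distrib, Finset.sum_pi_single', Finset.sum_pi_single']
    simp [SimpleGraph.mem_neighborFinset, SimpleGraph.adj_comm]
  have hD : (Matrix.diagonal (fun v => (H.degree v : ℝ)) *ᵥ (Pi.single a 1 - Pi.single b 1)) x
      = (H.degree x : ℝ) * ((Pi.single a 1 - Pi.single b 1 : V → ℝ) x) :=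
    Matrix.mulVec_diagonal _ _ _
  rw [Matrix.add_mulVec, Matrix.smul_mulVec, Matrix.smul_mulVec]
  simp only [Pi.add_apply, Pi.smul_apply, smul_eq_mul, hA, hD]
  by_cases hxa : x = a
  · subst hxa
    simp [Pi.single_apply, hab, Ne.symm hab, hAdj, H.irrefl, hda]
    ring
  · by_cases hxb : x = b
    · subst hxb
      simp [Pi.single_apply, hab, Ne.symm hab, hAdj.symm, H.irrefl, hdb]
      ring
    · rw [if_congr (hiff x hxa hxb) rfl rfl]
      simp [Pi.single_apply, hxa, hxb]

lemma liSingle {V : Type*} [Fintype V] [DecidableEq V] {m : ℕ} (a : V) (f : Fin m → V)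
    (hf : Function.Injective f) (hfa : ∀ j, f j ≠ a) :
    LinearIndependent ℝ (fun j => (Pi.single a 1 - Pi.single (f j) 1 : V → ℝ)) := by
  rw [Fintype.linearIndependent_iff]
  intro g hg j
  have h := congrFun hg (f j)
  simp only [Finset.sum_apply, Pi.smul_apply, Pi.sub_apply, Pi.single_apply, smul_eq_mul,
    Pi.zero_apply, hf.eq_iff, (hfa j)] at h
  simp only [if_false, zero_sub, mul_neg, Finset.sum_neg_distrib, neg_eq_zero,
    mul_ite, mul_one, mul_zero, Finset.sum_ite_eq, Finset.mem_univ, if_true] at h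
  exact h

end Generic

section Dihedral

open DihedralGroup

variable {n : ℕ} [NeZero n]

lemma ord_r_dvd (i : ZMod n) : orderOf (r i : DihedralGroup n) ∣ n := by
  have h1 : (r i : DihedralGroup n) = (r 1) ^ i.val := by
    rw [r_one_pow, ZMod.natCast_val, ZMod.cast_id]
  calc orderOf (r i : DihedralGroup n) = orderOf ((r 1 : DihedralGroup n) ^ i.val) := by rw [h1]
    _ ∣ orderOf (r 1 : DihedralGroup n) := orderOf_pow_dvd i.val
    _ = n := orderOf_r_one

omit [NeZero n] in
lemma r_ne_one {i : ZMod n} (hi : i ≠ 0) : (r i : DihedralGroup n) ≠ 1 := by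
  rw [one_def]
  intro h
  exact hi (r.inj h)

omit [NeZero n] in
lemma ord_r_ne_one {i : ZMod n} (hi : i ≠ 0) : orderOf (r i : DihedralGroup n) ≠ 1 := fun h =>
  r_ne_one hi (orderOf_eq_one_iff.mp h)

lemma notAdj_sr_r (hodd : Odd n) {i : ZMod n} (hi : i ≠ 0) (j : ZMod n) :
    ¬ (superpowerGraph (DihedralGroup n)).Adj (sr j) (r i) := by
  have hodd' : Odd (orderOf (r i : DihedralGroup n)) := hodd.of_dvd_nat (ord_r_dvd i)
  have h1 : orderOf (r i : DihedralGroup n) ≠ 1 := ord_r_ne_one hi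
  rintro ⟨-, h | h⟩
  · rw [orderOf_sr] at h
    rw [Nat.odd_iff] at hodd'
    omega
  · rw [orderOf_sr] at h
    rw [Nat.odd_iff] at hodd'
    have h2 := Nat.le_of_dvd (by norm_num) h
    have h3 := (Nat.dvd_prime Nat.prime_two).mp h
    omega

lemma adj_r_r {i j : ZMod n}
    (hcomp : ∀ d1 d2 : ℕ, d1 ∣ n → d2 ∣ n → d1 ∣ d2 ∨ d2 ∣ d1)
    (hij : i ≠ j) : (superpowerGraph (DihedralGroup n)).Adj (r i) (r j) :=
  ⟨by simp [hij], hcomp _ _ (ord_r_dvd i) (ord_r_dvd j)⟩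

omit [NeZero n] in
lemma adj_sr_sr {i j : ZMod n} (hij : i ≠ j) :
    (superpowerGraph (DihedralGroup n)).Adj (sr i) (sr j) :=
  ⟨by simp [hij], by rw [orderOf_sr, orderOf_sr]; exact Or.inl dvd_rfl⟩

omit [NeZero n] in
lemma adj_r0_sr (j : ZMod n) :
    (superpowerGraph (DihedralGroup n)).Adj (r 0) (sr j) :=
  ⟨by simp [-r_zero], by rw [← one_def, orderOf_one, orderOf_sr]; exact Or.inl (one_dvd 2)⟩

omit [NeZero n] in
lemma r_inj : Function.Injective (r : ZMod n → DihedralGroup n) := fun a b h => by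
  simpa using h

omit [NeZero n] in
lemma sr_inj : Function.Injective (sr : ZMod n → DihedralGroup n) := fun a b h => by
  simpa using h

lemma degree_r (hodd : Odd n)
    (hcomp : ∀ d1 d2 : ℕ, d1 ∣ n → d2 ∣ n → d1 ∣ d2 ∨ d2 ∣ d1)
    {c : ZMod n} (hc : c ≠ 0) :
    (superpowerGraph (DihedralGroup n)).degree (r c) = n - 1 := by
  have key : (superpowerGraph (DihedralGroup n)).neighborFinset (r c)
      = (Finset.univ.image (r : ZMod n → DihedralGroup n)).erase (r c) := by
    ext x
    rw [SimpleGraph.mem_neighborFinset, Finset.mem_erase]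
    cases x with
    | r m =>
      constructor
      · rintro ⟨hne, -⟩
        exact ⟨hne.symm, Finset.mem_image_of_mem _ (Finset.mem_univ m)⟩
      · rintro ⟨hne, -⟩
        exact adj_r_r hcomp (fun h => hne (by rw [h]))
    | sr m =>
      constructor
      · intro h
        exact absurd h.symm (notAdj_sr_r hodd hc m)
      · rintro ⟨-, hmem⟩
        simp at hmem
  rw [SimpleGraph.degree, key, Finset.card_erase_of_mem
    (Finset.mem_image_of_mem _ (Finset.mem_univ c)),
    Finset.card_image_of_injective _ r_inj]
  simp [ZMod.card]

lemma degree_sr (hodd : Odd n) (c : ZMod n) :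
    (superpowerGraph (DihedralGroup n)).degree (sr c) = n := by
  have key : (superpowerGraph (DihedralGroup n)).neighborFinset (sr c)
      = insert (r 0) ((Finset.univ.image (sr : ZMod n → DihedralGroup n)).erase (sr c)) := by
    ext x
    rw [SimpleGraph.mem_neighborFinset, Finset.mem_insert, Finset.mem_erase]
    cases x with
    | r m =>
      constructor
      · intro h
        left
        by_contra hm
        have hm0 : m ≠ 0 := fun h0 => hm (by rw [h0])
        exact notAdj_sr_r hodd hm0 c h
      · rintro (h | ⟨-, hmem⟩)
        · rw [h]
          exact (adj_r0_sr c).symm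
        · simp at hmem
    | sr m =>
      constructor
      · rintro ⟨hne, -⟩
        exact Or.inr ⟨hne.symm, Finset.mem_image_of_mem _ (Finset.mem_univ m)⟩
      · rintro (h | ⟨hne, -⟩)
        · simp [-r_zero] at h
        · exact adj_sr_sr (fun h => hne (by rw [h]))
  rw [SimpleGraph.degree, key, Finset.card_insert_of_notMem (by simp [-r_zero]),
    Finset.card_erase_of_mem (Finset.mem_image_of_mem _ (Finset.mem_univ c)),
    Finset.card_image_of_injective _ sr_inj]
  have : 1 ≤ n := NeZero.one_le
  simp [ZMod.card]
  omega

end Dihedral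

theorem stmt14 (p k : ℕ) (hp : Fact p.Prime) (hp2 : p ≠ 2) (hk : 1 ≤ k) (α : ℝ) :
    p ^ k - 2 ≤
      Polynomial.rootMultiplicity ((p : ℝ) ^ k * α - 1)
        (Matrix.charpoly
          (α • Matrix.diagonal
              (fun v : DihedralGroup (p ^ k) => ((superpowerGraph _).degree v : ℝ)) +
            (1 - α) • (superpowerGraph (DihedralGroup (p ^ k))).adjMatrix ℝ)) ∧
    p ^ k - 1 ≤
      Polynomial.rootMultiplicity (((p : ℝ) ^ k + 1) * α - 1)
        (Matrix.charpoly
          (α • Matrix.diagonal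
              (fun v : DihedralGroup (p ^ k) => ((superpowerGraph _).degree v : ℝ)) +
            (1 - α) • (superpowerGraph (DihedralGroup (p ^ k))).adjMatrix ℝ)) := by
  classical
  set n := p ^ k with hn
  have hp3 : 3 ≤ p := by
    have := hp.1.two_le
    rcases Nat.lt_or_ge p 3 with h | h
    · interval_cases p <;> simp_all
    · exact h
  have h3 : 3 ≤ n := le_trans hp3 (Nat.le_self_pow (by omega) p)
  haveI : NeZero n := ⟨by positivity⟩
  have hodd : Odd n := (hp.1.odd_of_ne_two hp2).pow
  have hcomp : ∀ d1 d2 : ℕ, d1 ∣ n → d2 ∣ n → d1 ∣ d2 ∨ d2 ∣ d1 := by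
    intro d1 d2 h1 h2
    obtain ⟨i, hi, rfl⟩ := (Nat.dvd_prime_pow hp.1).mp h1
    obtain ⟨j, hj, rfl⟩ := (Nat.dvd_prime_pow hp.1).mp h2
    rcases le_total i j with h | h
    · exact Or.inl (pow_dvd_pow p h)
    · exact Or.inr (pow_dvd_pow p h)
  have hval : ∀ t : ℕ, t < n → ((t : ZMod n)).val = t := fun t ht =>
    ZMod.val_natCast_of_lt ht
  have hcastne : ∀ s t : ℕ, s < n → t < n → s ≠ t → ((s : ZMod n) ≠ (t : ZMod n)) := by
    intro s t hs ht hst h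
    exact hst (by rw [← hval s hs, ← hval t ht, h])
  have hcastnR : (n : ℝ) = (p : ℝ) ^ k := by rw [hn]; push_cast; ring
  set H := superpowerGraph (DihedralGroup n) with hH
  set M := (α • Matrix.diagonal
      (fun v : DihedralGroup n => ((superpowerGraph (DihedralGroup n)).degree v : ℝ)) +
      (1 - α) • (superpowerGraph (DihedralGroup n)).adjMatrix ℝ) with hM
  constructor
  · -- rotations: eigenvalue p^k α - 1, multiplicity ≥ n - 2
    set f : Fin (n - 2) → DihedralGroup n :=
      fun j => DihedralGroup.r ((j.val + 2 : ℕ) : ZMod n) with hf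
    have hidx : ∀ j : Fin (n - 2), (j.val + 2) < n := fun j => by have := j.isLt; omega
    have hidxne0 : ∀ j : Fin (n - 2), ((j.val + 2 : ℕ) : ZMod n) ≠ 0 := by
      intro j
      have := hcastne (j.val + 2) 0 (hidx j) (by omega) (by omega)
      simpa using this
    have hidxne1 : ∀ j : Fin (n - 2), ((j.val + 2 : ℕ) : ZMod n) ≠ ((1 : ℕ) : ZMod n) :=
      fun j => hcastne (j.val + 2) 1 (hidx j) (by omega) (by omega)
    have h1cast : ((1 : ℕ) : ZMod n) = (1 : ZMod n) := by norm_cast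
    have h1ne0 : (1 : ZMod n) ≠ 0 := by
      rw [← h1cast]
      have := hcastne 1 0 (by omega) (by omega) (by omega)
      simpa using this
    have hfinj : Function.Injective f := by
      intro j1 j2 h
      have h2 := r_inj h
      have h3' := congrArg ZMod.val h2
      rw [hval _ (hidx j1), hval _ (hidx j2)] at h3'
      exact Fin.ext (by omega)
    have hfa : ∀ j, f j ≠ DihedralGroup.r 1 := by
      intro j h
      exact hidxne1 j (by rw [h1cast]; exact r_inj h)
    have hev : ∀ j, M *ᵥ (Pi.single (DihedralGroup.r 1) 1 - Pi.single (f j) 1)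
        = ((p : ℝ) ^ k * α - 1) • (Pi.single (DihedralGroup.r 1) 1 - Pi.single (f j) 1) := by
      intro j
      have heq := helperEig (superpowerGraph (DihedralGroup n)) α (DihedralGroup.r 1) (f j)
        (fun h => hfa j h.symm) (n - 1)
        (degree_r hodd hcomp h1ne0)
        (degree_r hodd hcomp (hidxne0 j))
        (adj_r_r hcomp (by rw [← h1cast]; exact fun h => hidxne1 j h.symm))
        (by
          intro x hxa hxb
          cases x with
          | r m =>
            constructor
            · intro _
              exact adj_r_r hcomp (fun h => hxb (by rw [hf, h]))
            · intro _
              exact adj_r_r hcomp (fun h => hxa (by rw [h]))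
          | sr m =>
            exact iff_of_false (notAdj_sr_r hodd h1ne0 m) (notAdj_sr_r hodd (hidxne0 j) m))
      rw [← hM] at heq
      rw [heq]
      congr 1
      rw [← hcastnR]
      have h1n : 1 ≤ n := by omega
      push_cast [Nat.cast_sub h1n]
      ring
    exact rootMult_ge M ((p : ℝ) ^ k * α - 1) _
      (liSingle (DihedralGroup.r 1) f hfinj hfa) hev
  · -- reflections: eigenvalue (p^k+1) α - 1, multiplicity ≥ n - 1
    set f : Fin (n - 1) → DihedralGroup n :=
      fun j => DihedralGroup.sr ((j.val + 1 : ℕ) : ZMod n) with hf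
    have hidx : ∀ j : Fin (n - 1), (j.val + 1) < n := fun j => by have := j.isLt; omega
    have hidxne0 : ∀ j : Fin (n - 1), ((j.val + 1 : ℕ) : ZMod n) ≠ 0 := by
      intro j
      have := hcastne (j.val + 1) 0 (hidx j) (by omega) (by omega)
      simpa using this
    have hfinj : Function.Injective f := by
      intro j1 j2 h
      have h2 := sr_inj h
      have h3' := congrArg ZMod.val h2
      rw [hval _ (hidx j1), hval _ (hidx j2)] at h3'
      exact Fin.ext (by omega)
    have hfa : ∀ j, f j ≠ DihedralGroup.sr 0 := by
      intro j h
      exact hidxne0 j (sr_inj h)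
    have hev : ∀ j, M *ᵥ (Pi.single (DihedralGroup.sr 0) 1 - Pi.single (f j) 1)
        = (((p : ℝ) ^ k + 1) * α - 1) • (Pi.single (DihedralGroup.sr 0) 1 - Pi.single (f j) 1) := by
      intro j
      have heq := helperEig (superpowerGraph (DihedralGroup n)) α (DihedralGroup.sr 0) (f j)
        (fun h => hfa j h.symm) n
        (degree_sr hodd 0)
        (degree_sr hodd _)
        (adj_sr_sr (fun h => hidxne0 j h.symm))
        (by
          intro x hxa hxb
          cases x with
          | r m =>
            by_cases hm : m = 0
            · subst hm
              exact iff_of_true (adj_r0_sr 0) (adj_r0_sr _)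
            · exact iff_of_false
                (fun h => notAdj_sr_r hodd hm 0 h.symm)
                (fun h => notAdj_sr_r hodd hm _ h.symm)
          | sr m =>
            constructor
            · intro _
              exact adj_sr_sr (fun h => hxb (by rw [hf, h]))
            · intro _
              exact adj_sr_sr (fun h => hxa (by rw [h])))
      rw [← hM] at heq
      rw [heq]
      congr 1
      rw [← hcastnR]
    exact rootMult_ge M (((p : ℝ) ^ k + 1) * α - 1) _
      (liSingle (DihedralGroup.sr 0) f hfinj hfa) hev
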